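/- If V ⊆ ℝ^n is the kernel of a totally unimodular matrix, then every elementary vector of V is a scalar multiple of a vector with entries in {-1, 0, +1}. -/

import Mathlib

open Finset

variable {n : ℕ}

/-- The support of a vector. -/
def supp (x : Fin n → ℝ) : Set (Fin n) := {j | x j ≠ 0}

/-- A nonzero vector of `V` is elementary if no nonzero vector of `V` has support
properly contained in its support. -/
def IsElementary (V : Submodule ℝ (Fin n → ℝ)) (x : Fin n → ℝ) : Prop :=
  x ∈ V ∧ x ≠ 0 ∧ ∀ y ∈ V, y ≠ 0 → ¬ (supp y ⊂ supp x)

/-- A primitive vector: elementary with entries in `{-1, 0, 1}`. -/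
def IsPrimitive (V : Submodule ℝ (Fin n → ℝ)) (x : Fin n → ℝ) : Prop :=
  IsElementary V x ∧ ∀ j, x j ∈ ({-1, 0, 1} : Set ℝ)

/-- `y` conforms to `x`. -/
def Conforms (y x : Fin n → ℝ) : Prop := ∀ j, y j ≠ 0 → y j * x j > 0

/-- A regular space: the kernel of a totally unimodular matrix. -/
def IsRegularSpace (V : Submodule ℝ (Fin n → ℝ)) : Prop :=
  ∃ (m : ℕ) (A : Matrix (Fin m) (Fin n) ℝ),
    A.IsTotallyUnimodular ∧ V = LinearMap.ker A.mulVecLin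

/-- An `r`-path: a primitive vector with value `+1` at `r`. -/
def IsRPath (V : Submodule ℝ (Fin n → ℝ)) (r : Fin n) (P : Fin n → ℝ) : Prop :=
  IsPrimitive V P ∧ P r = 1

/-- Feasibility with respect to capacity `c` (no constraint at `r`). -/
def Feasible (c : Fin n → ℝ) (r : Fin n) (f : Fin n → ℝ) : Prop :=
  ∀ j, j ≠ r → 0 ≤ f j ∧ f j ≤ c j

/-- An `r`-path `P` is augmenting for the flow `f`. -/
def Augmenting (V : Submodule ℝ (Fin n → ℝ)) (c : Fin n → ℝ) (r : Fin n)
    (f P : Fin n → ℝ) : Prop :=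
  IsRPath V r P ∧ ∃ ε : ℝ, 0 < ε ∧ Feasible c r (f + ε • P)

/-- The 1-norm. -/
def onorm (x : Fin n → ℝ) : ℝ := ∑ j, |x j|

/-- A shortest augmenting `r`-path. -/
def ShortestAug (V : Submodule ℝ (Fin n → ℝ)) (c : Fin n → ℝ) (r : Fin n)
    (f P : Fin n → ℝ) : Prop :=
  Augmenting V c r f P ∧ ∀ Q, Augmenting V c r f Q → onorm P ≤ onorm Q

/-- `g` is obtained from `f` by maximal augmentation along `P`. -/
def MaxAug (c : Fin n → ℝ) (r : Fin n) (f P g : Fin n → ℝ) : Prop :=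
  ∃ ε : ℝ, 0 < ε ∧ g = f + ε • P ∧ Feasible c r g ∧
    ∀ ε' : ℝ, ε < ε' → ¬ Feasible c r (f + ε' • P)

/-- A conformal primitive decomposition of `P + Q` in which `M` and `J` are the two
`r`-path summands (`M` playing the role of `P ∧ Q` and `J` of `P ∨ Q`). -/
def MeetJoinDecomp (V : Submodule ℝ (Fin n → ℝ)) (r : Fin n)
    (P Q M J : Fin n → ℝ) : Prop :=
  ∃ (k : ℕ) (p : Fin k → Fin n → ℝ) (a b : Fin k),
    (∀ i, IsPrimitive V (p i)) ∧ (∀ i, Conforms (p i) (P + Q)) ∧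
    (∑ i, p i) = P + Q ∧ a ≠ b ∧ p a = M ∧ p b = J ∧
    p a r = 1 ∧ p b r = 1 ∧ ∀ i, p i r = 1 → i = a ∨ i = b

open Matrix in
lemma aux_inv_submatrix {m t : ℕ} (B : Matrix (Fin m) (Fin t) ℝ)
    (h : LinearIndependent ℝ (fun i => Bᵀ i)) :
    ∃ f : Fin t → Fin m, Function.Injective f ∧ IsUnit (B.submatrix f id) := by
  classical
  have hrank : Bᵀ.rank = t := by
    have := LinearIndependent.rank_matrix (M := Bᵀ) h
    simpa using this
  have hspan : Module.finrank ℝ (Submodule.span ℝ (Set.range B)) = t := by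
    have := Bᵀ.rank_eq_finrank_span_cols
    change Bᵀ.rank = Module.finrank ℝ (Submodule.span ℝ (Set.range B)) at this
    rw [← this, hrank]
  obtain ⟨b, hbsub, hbspan, hbind⟩ := exists_linearIndependent ℝ (Set.range B)
  haveI : Fintype b := ((Set.finite_range B).subset hbsub).fintype
  have hcard : Fintype.card b = t := by
    have h1 := finrank_span_set_eq_card hbind
    rw [hbspan, hspan] at h1
    rw [← Set.toFinset_card]
    omega
  let e : Fin t ≃ b := (Fintype.equivFinOfCardEq hcard).symm
  choose f0 hf0 using fun v : b => (hbsub v.2 : (v : Fin t → ℝ) ∈ Set.range B)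
  refine ⟨fun i => f0 (e i), ?_, ?_⟩
  · intro a c hac
    simp only at hac
    have : (e a : Fin t → ℝ) = (e c : Fin t → ℝ) := by
      rw [← hf0 (e a), ← hf0 (e c), hac]
    exact e.injective (Subtype.coe_injective this)
  · rw [← Matrix.linearIndependent_rows_iff_isUnit]
    have hrows : (fun i => (B.submatrix (fun i => f0 (e i)) id) i)
        = fun i => ((e i : Fin t → ℝ)) := by
      funext i
      ext j
      simpa [Matrix.submatrix] using congrFun (hf0 (e i)) j
    show LinearIndependent ℝ (fun i => (B.submatrix (fun i => f0 (e i)) id) i); rw [hrows]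
    exact hbind.comp e e.injective

open Matrix in
theorem stmt1 (V : Submodule ℝ (Fin n → ℝ)) (hV : IsRegularSpace V)
    (x : Fin n → ℝ) (hx : IsElementary V x) :
    ∃ (lam : ℝ) (p : Fin n → ℝ), (∀ j, p j ∈ ({-1, 0, 1} : Set ℝ)) ∧ x = lam • p := by
  classical
  obtain ⟨m, A, hATU, hVk⟩ := hV
  obtain ⟨hxV, hx0, hmin⟩ := hx
  have hker : ∀ y : Fin n → ℝ, y ∈ V ↔ A.mulVec y = 0 := by
    intro y
    rw [hVk, LinearMap.mem_ker, Matrix.mulVecLin_apply]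
  obtain ⟨k, hk⟩ : ∃ k, x k ≠ 0 := Function.ne_iff.mp hx0
  -- the key "elementarity" lemma
  have key : ∀ y : Fin n → ℝ, A.mulVec y = 0 → (∀ j, x j = 0 → y j = 0) →
      y k = 0 → y = 0 := by
    intro y hy hsupp hyk
    by_contra hy0
    refine hmin y ((hker y).mpr hy) hy0 ?_
    have hsub : supp y ⊆ supp x := by
      intro j hj
      intro hxj
      exact hj (hsupp j hxj)
    rw [Set.ssubset_iff_of_subset hsub]
    exact ⟨k, hk, fun h => h hyk⟩
  -- set up the support minus k
  set T : Finset (Fin n) := (Finset.univ.filter (fun j => x j ≠ 0)).erase k with hT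
  have hmemT : ∀ j, j ∈ T ↔ (j ≠ k ∧ x j ≠ 0) := by
    intro j; simp [hT]
  set t : ℕ := T.card with ht
  set g : Fin t → Fin n := fun i => (T.equivFin.symm i : Fin n) with hg
  have hginj : Function.Injective g := by
    intro a b hab
    exact T.equivFin.symm.injective (Subtype.coe_injective hab)
  have hgT : ∀ i, g i ∈ T := fun i => (T.equivFin.symm i).2
  have hgsurj : ∀ j ∈ T, ∃ i, g i = j := by
    intro j hj
    exact ⟨T.equivFin ⟨j, hj⟩, by simp [hg]⟩
  -- columns of A indexed by T are linearly independent
  have hcols : LinearIndependent ℝ (fun i => (A.submatrix id g)ᵀ i) := by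
    rw [Fintype.linearIndependent_iff]
    intro c hc i
    set y : Fin n → ℝ := ∑ i', c i' • (Pi.single (g i') (1 : ℝ) : Fin n → ℝ) with hy
    have hyval : ∀ i', y (g i') = c i' := by
      intro i'
      rw [hy, Finset.sum_apply]
      rw [Finset.sum_eq_single i']
      · simp
      · intro b _ hb
        simp only [Pi.smul_apply, Pi.single_apply, smul_eq_mul]
        rw [if_neg (fun h => hb (hginj h).symm)]
        ring
      · simp
    have hyz : ∀ j, (∀ i', g i' ≠ j) → y j = 0 := by
      intro j hj
      rw [hy, Finset.sum_apply]
      apply Finset.sum_eq_zero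
      intro i' _
      simp [Pi.single_apply, hj i']
    have hAy : A.mulVec y = 0 := by
      rw [hy, ← Matrix.mulVecLin_apply, map_sum]
      rw [← hc]
      apply Finset.sum_congr rfl
      intro i' _
      rw [_root_.map_smul]
      congr 1
      rw [Matrix.mulVecLin_apply, Matrix.mulVec_single]
      funext r
      simp [Matrix.transpose_apply, Matrix.submatrix_apply]
    have hy0 : y = 0 := by
      apply key y hAy
      · intro j hxj
        apply hyz
        intro i' hgi'
        exact ((hmemT (g i')).mp (hgT i')).2 (hgi' ▸ hxj)
      · apply hyz
        intro i' hgi'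
        exact ((hmemT (g i')).mp (hgT i')).1 hgi'
    rw [← hyval i, hy0]
    rfl
  obtain ⟨f, hfinj, hfunit⟩ := aux_inv_submatrix (A.submatrix id g) hcols
  set C : Matrix (Fin t) (Fin t) ℝ := A.submatrix f g with hC
  have hCeq : (A.submatrix id g).submatrix f id = C := by
    rw [hC, Matrix.submatrix_submatrix]
    rfl
  rw [hCeq] at hfunit
  -- Cramer setup
  set x' : Fin t → ℝ := fun i => x (g i) with hx'
  set bb : Fin t → ℝ := fun r => -(x k) * A (f r) k with hbb
  have hkT : k ∉ T := by simp [hT]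
  have hCx : C.mulVec x' = bb := by
    funext r
    have hrow : ∑ j, A (f r) j * x j = 0 := by
      simpa [Matrix.mulVec, dotProduct] using congrFun ((hker x).mp hxV) (f r)
    have h1 : ∑ j ∈ insert k T, A (f r) j * x j = ∑ j, A (f r) j * x j := by
      apply Finset.sum_subset (Finset.subset_univ _)
      intro j _ hj
      have hxj : x j = 0 := by
        by_contra hxj
        by_cases hjk : j = k
        · exact hj (hjk ▸ Finset.mem_insert_self k T)
        · exact hj (Finset.mem_insert_of_mem ((hmemT j).mpr ⟨hjk, hxj⟩))
      rw [hxj, mul_zero]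
    rw [Finset.sum_insert hkT, hrow] at h1
    have h2 : ∑ j ∈ T, A (f r) j * x j = ∑ i, A (f r) (g i) * x (g i) := by
      rw [← Finset.sum_coe_sort T (fun j => A (f r) j * x j)]
      exact (Equiv.sum_comp T.equivFin.symm (fun a : T => A (f r) (a : Fin n) * x (a : Fin n))).symm
    rw [h2] at h1
    show ∑ i, C r i * x' i = bb r
    simp only [hC, hbb, hx', Matrix.submatrix_apply]
    linarith
  -- solve via cramer
  have hdet0 : C.det ≠ 0 := ((Matrix.isUnit_iff_isUnit_det C).mp hfunit).ne_zero
  have hsolve : x' = (C.det)⁻¹ • Matrix.cramer C bb := by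
    apply Matrix.mulVec_injective_iff_isUnit.mpr hfunit
    rw [hCx, Matrix.mulVec_smul, Matrix.mulVec_cramer, smul_smul, inv_mul_cancel₀ hdet0, one_smul]
  -- each cramer entry is (-x k) times a TU determinant
  have hentry : ∀ i, ∃ d : ℝ, d ∈ ({-1, 0, 1} : Set ℝ) ∧
      Matrix.cramer C bb i = -(x k) * d := by
    intro i
    have hbbsmul : bb = (-(x k)) • (fun r => A (f r) k) := by
      funext r
      simp [hbb, mul_comm]
    have hupd : C.updateCol i (fun r => A (f r) k)
        = A.submatrix f (Function.update g i k) := by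
      ext r j
      by_cases hj : j = i
      · subst hj
        simp [Matrix.updateCol_apply, Function.update_apply, hC]
      · simp [Matrix.updateCol_apply, Function.update_apply, hj, hC]
    have hupdinj : Function.Injective (Function.update g i k) := by
      intro a b hab
      have hknr : ∀ i', g i' ≠ k := fun i' => ((hmemT (g i')).mp (hgT i')).1
      by_cases ha : a = i <;> by_cases hb : b = i
      · rw [ha, hb]
      · rw [Function.update_apply, Function.update_apply, if_pos ha, if_neg hb] at hab
        exact absurd hab.symm (hknr b)
      · rw [Function.update_apply, Function.update_apply, if_neg ha, if_pos hb] at hab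
        exact absurd hab (hknr a)
      · rw [Function.update_apply, Function.update_apply, if_neg ha, if_neg hb] at hab
        exact hginj hab
    obtain ⟨sg, hsg⟩ := hATU t f (Function.update g i k) hfinj hupdinj
    refine ⟨(A.submatrix f (Function.update g i k)).det, ?_, ?_⟩
    · rw [← hsg]
      cases sg <;> simp
    · rw [Matrix.cramer_apply, hbbsmul, Matrix.det_updateCol_smul, hupd]
  have hdet : C.det = 1 ∨ C.det = -1 := by
    obtain ⟨sg, hsg⟩ := hATU t f g hfinj hginj
    rw [hC] at hdet0 ⊢
    cases sg with
    | zero => exact absurd hsg.symm (by simpa using hdet0)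
    | pos => left; rw [← hsg]; simp
    | neg => right; rw [← hsg]; simp
  -- conclude
  refine ⟨x k, fun j => x j / x k, ?_, ?_⟩
  · intro j
    by_cases hxj : x j = 0
    · right; left; simp [hxj]
    by_cases hjk : j = k
    · right; right; simp [hjk, div_self hk]
    · obtain ⟨i, hi⟩ := hgsurj j ((hmemT j).mpr ⟨hjk, hxj⟩)
      obtain ⟨d, hd, hcram⟩ := hentry i
      have hxg : x j = (C.det)⁻¹ * (-(x k) * d) := by
        rw [← hi]
        have := congrFun hsolve i
        simp only [hx', Pi.smul_apply, smul_eq_mul] at this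
        rw [this, hcram]
      have hinv : (C.det)⁻¹ = C.det := by
        rcases hdet with h | h <;> rw [h] <;> norm_num
      show x j / x k ∈ ({-1, 0, 1} : Set ℝ)
      rw [hxg, hinv]
      have : C.det * (-(x k) * d) / x k = -(C.det * d) := by
        field_simp
      rw [this]
      rcases hdet with h | h <;> rcases hd with h' | h' | h' <;>
        rw [h, h'] <;> norm_num [Set.mem_insert_iff, Set.mem_singleton_iff]
  · funext j
    simp only [Pi.smul_apply, smul_eq_mul]
    field_simp
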